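/- arXiv:1208.3490 — 4 statements merged into one kernel-verified Lean document; each statement's English description precedes it below -/
import Mathlib

section
/- Let T be an ideal irreducible positive operator on a real Banach lattice X with dim X > 1. If T*x* = λx* for some positive functional x* > 0 and λ ∈ ℝ, then x* is strictly positive and λ > 0. -/
set_option linter.unusedSectionVars false
set_option maxHeartbeats 1000000


open scoped ENNReal

variable {X : Type*}

def IsPositiveOp [NormedAddCommGroup X] [Lattice X] [HasSolidNorm X] [IsOrderedAddMonoid X] [NormedSpace ℝ X]
    (T : X →L[ℝ] X) : Prop := ∀ x : X, 0 ≤ x → 0 ≤ T x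

def IsClosedIdeal [NormedAddCommGroup X] [Lattice X] [HasSolidNorm X] [IsOrderedAddMonoid X] [NormedSpace ℝ X]
    (J : Submodule ℝ X) : Prop :=
  IsClosed (J : Set X) ∧ ∀ x y : X, |y| ≤ |x| → x ∈ J → y ∈ J

def IdealIrreducible [NormedAddCommGroup X] [Lattice X] [HasSolidNorm X] [IsOrderedAddMonoid X] [NormedSpace ℝ X]
    (T : X →L[ℝ] X) : Prop :=
  ∀ J : Submodule ℝ X, IsClosedIdeal J → (∀ x ∈ J, T x ∈ J) → J = ⊥ ∨ J = ⊤

/-- A band: a solid submodule closed under existing suprema. -/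
def IsBand [NormedAddCommGroup X] [Lattice X] [HasSolidNorm X] [IsOrderedAddMonoid X] [NormedSpace ℝ X]
    (J : Submodule ℝ X) : Prop :=
  (∀ x y : X, |y| ≤ |x| → x ∈ J → y ∈ J) ∧
    ∀ (A : Set X) (x : X), A ⊆ (J : Set X) → IsLUB A x → x ∈ J

def BandIrreducible [NormedAddCommGroup X] [Lattice X] [HasSolidNorm X] [IsOrderedAddMonoid X] [NormedSpace ℝ X]
    (T : X →L[ℝ] X) : Prop :=
  ∀ J : Submodule ℝ X, IsBand J → (∀ x ∈ J, T x ∈ J) → J = ⊥ ∨ J = ⊤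

def QuasiInterior [NormedAddCommGroup X] [Lattice X] [HasSolidNorm X] [IsOrderedAddMonoid X] [NormedSpace ℝ X]
    (x : X) : Prop :=
  closure {y : X | ∃ c : ℝ, |y| ≤ c • x} = Set.univ

/-- A weak (order) unit. -/
def WeakUnit [NormedAddCommGroup X] [Lattice X] [HasSolidNorm X] [IsOrderedAddMonoid X] [NormedSpace ℝ X]
    (x : X) : Prop := 0 < x ∧ ∀ y : X, |y| ⊓ x = 0 → y = 0

def IsPositiveFunc [NormedAddCommGroup X] [Lattice X] [HasSolidNorm X] [IsOrderedAddMonoid X] [NormedSpace ℝ X]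
    (f : StrongDual ℝ X) : Prop := ∀ x : X, 0 ≤ x → 0 ≤ f x

def StrictlyPositiveFunc [NormedAddCommGroup X] [Lattice X] [HasSolidNorm X] [IsOrderedAddMonoid X] [NormedSpace ℝ X]
    (f : StrongDual ℝ X) : Prop := ∀ x : X, 0 < x → 0 < f x

noncomputable def adjOp [NormedAddCommGroup X] [Lattice X] [HasSolidNorm X] [IsOrderedAddMonoid X] [NormedSpace ℝ X]
    (T : X →L[ℝ] X) : StrongDual ℝ X →L[ℝ] StrongDual ℝ X :=
  (ContinuousLinearMap.compL ℝ X X ℝ).flip T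

/-- `T` is σ-order continuous: `x_n ↓ 0` implies `T x_n ↓ 0`. -/
def SigmaOrderContinuousOp [NormedAddCommGroup X] [Lattice X] [HasSolidNorm X] [IsOrderedAddMonoid X] [NormedSpace ℝ X]
    (T : X →L[ℝ] X) : Prop :=
  ∀ u : ℕ → X, Antitone u → IsGLB (Set.range u) 0 →
    IsGLB (Set.range fun n => T (u n)) 0

/-- A σ-order continuous functional. -/
def SigmaOrderContinuousFunc [NormedAddCommGroup X] [Lattice X] [HasSolidNorm X] [IsOrderedAddMonoid X] [NormedSpace ℝ X]
    (f : StrongDual ℝ X) : Prop :=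
  ∀ u : ℕ → X, Antitone u → IsGLB (Set.range u) 0 →
    Filter.Tendsto (fun n => f (u n)) Filter.atTop (nhds 0)

/-- A set is relatively weakly compact. -/
def RelWeaklyCompact [NormedAddCommGroup X] [Lattice X] [HasSolidNorm X] [IsOrderedAddMonoid X] [NormedSpace ℝ X]
    (s : Set X) : Prop :=
  IsCompact (closure ((toWeakSpace ℝ X) '' s))

/-- `T` is order weakly compact: `T[0,x]` is relatively weakly compact for all `x > 0`. -/
def OrderWeaklyCompactOp [NormedAddCommGroup X] [Lattice X] [HasSolidNorm X] [IsOrderedAddMonoid X] [NormedSpace ℝ X]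
    (T : X →L[ℝ] X) : Prop :=
  ∀ x : X, 0 < x → RelWeaklyCompact (T '' Set.Icc 0 x)

section helpers
variable [NormedAddCommGroup X] [Lattice X] [HasSolidNorm X] [IsOrderedAddMonoid X] [NormedSpace ℝ X]

lemma myContAbs : Continuous (fun x : X => |x|) := by
  have h : (fun x : X => |x|) = fun x => x⁺ + x⁻ := by
    funext x; rw [posPart_add_negPart]
  rw [h]; exact continuous_posPart.add continuous_negPart

lemma myAbsAdd (u v : X) : |u + v| ≤ |u| + |v| := by
  refine abs_le'.mpr ⟨add_le_add (le_abs_self u) (le_abs_self v), ?_⟩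
  rw [neg_add]
  exact add_le_add (neg_le_abs u) (neg_le_abs v)

lemma myRiesz (u v w : X) (hu : 0 ≤ u) (hv : 0 ≤ v) (hw : 0 ≤ w) :
    (u + v) ⊓ w ≤ u ⊓ w + v ⊓ w := by
  have h1 : (u + v) ⊓ w - u ≤ v ⊓ w := by
    refine le_inf ?_ ?_
    · rw [sub_le_iff_le_add']; exact inf_le_left
    · rw [sub_le_iff_le_add']
      exact inf_le_right.trans (le_add_of_nonneg_left hu)
  have h2 : (u + v) ⊓ w - v ⊓ w ≤ u ⊓ w :=
    le_inf (sub_le_comm.mp h1) ((sub_le_self _ (le_inf hv hw)).trans inf_le_right)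
  exact sub_le_iff_le_add.mp h2

lemma myInfNsmul {u w : X} (hu : 0 ≤ u) (hw : 0 ≤ w) (h : u ⊓ w = 0) :
    ∀ n : ℕ, (n • u) ⊓ w = 0 := by
  intro n
  induction n with
  | zero => simpa using inf_eq_left.mpr hw
  | succ k ih =>
    refine le_antisymm ?_ (le_inf (nsmul_nonneg hu _) hw)
    calc ((k + 1) • u) ⊓ w = (k • u + u) ⊓ w := by rw [succ_nsmul]
      _ ≤ (k • u) ⊓ w + u ⊓ w := myRiesz _ _ _ (nsmul_nonneg hu k) hu hw
      _ = 0 := by rw [ih, h, add_zero]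

lemma myNsmulNonnegCancel {y : X} {n : ℕ} (hn : 0 < n) (h : 0 ≤ n • y) : 0 ≤ y := by
  have hd : y⁺ ⊓ y⁻ = 0 := posPart_inf_negPart_eq_zero y
  have hsub : n • y⁺ - n • y⁻ = n • y := by
    rw [← nsmul_sub, posPart_sub_negPart]
  have h1 : n • y⁻ ≤ n • y⁺ := by
    rw [← sub_nonneg, hsub]; exact h
  obtain ⟨k, rfl⟩ : ∃ k, n = k + 1 := ⟨n - 1, (Nat.succ_pred_eq_of_pos hn).symm⟩
  have h2 : y⁻ ≤ (k + 1) • y⁺ := by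
    refine le_trans ?_ h1
    rw [succ_nsmul]
    exact le_add_of_nonneg_left (nsmul_nonneg (negPart_nonneg y) k)
  have h3 : ((k + 1) • y⁺) ⊓ y⁻ = 0 :=
    myInfNsmul (posPart_nonneg y) (negPart_nonneg y) hd (k + 1)
  have h4 : y⁻ ≤ 0 := by
    calc y⁻ ≤ ((k + 1) • y⁺) ⊓ y⁻ := le_inf h2 le_rfl
      _ = 0 := h3
  exact negPart_eq_zero.mp (le_antisymm h4 (negPart_nonneg y))

lemma mySmulNonneg (c : ℝ) (hc : 0 ≤ c) (x : X) (hx : 0 ≤ x) : 0 ≤ c • x := by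
  have hq : ∀ q : ℚ, 0 ≤ q → 0 ≤ (q : ℝ) • x := by
    intro q hq0
    have hden : (q.den : ℝ) • ((q : ℝ) • x) = (q.num.toNat : ℕ) • x := by
      rw [smul_smul, ← Nat.cast_smul_eq_nsmul ℝ]
      congr 1
      have h0 : (0 : ℤ) ≤ q.num := Rat.num_nonneg.mpr hq0
      have h1 : ((q.den : ℚ) * q : ℚ) = ((q.num.toNat : ℕ) : ℚ) := by
        rw [mul_comm]
        rw [show ((q.num.toNat : ℕ) : ℚ) = ((q.num : ℤ) : ℚ) by
          exact_mod_cast congrArg (fun z : ℤ => (z : ℚ)) (Int.toNat_of_nonneg h0)]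
        exact_mod_cast q.mul_den_eq_num
      exact_mod_cast congrArg (fun r : ℚ => (r : ℝ)) h1
    refine myNsmulNonnegCancel q.pos ?_
    rw [← Nat.cast_smul_eq_nsmul ℝ, hden]
    exact nsmul_nonneg hx _
  have hex : ∀ n : ℕ, ∃ q : ℚ, c < (q : ℝ) ∧ (q : ℝ) < c + 1 / (n + 1) := by
    intro n
    refine exists_rat_btwn ?_
    have h1 : (0 : ℝ) < 1 / (n + 1) := by positivity
    linarith
  choose qn hqn1 hqn2 using hex
  have htend : Filter.Tendsto (fun n : ℕ => ((qn n : ℝ))) Filter.atTop (nhds c) := by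
    have h2 : Filter.Tendsto (fun n : ℕ => c + 1 / ((n : ℝ) + 1)) Filter.atTop (nhds c) := by
      have := tendsto_one_div_add_atTop_nhds_zero_nat (𝕜 := ℝ)
      simpa using (tendsto_const_nhds (x := c) (f := Filter.atTop (α := ℕ))).add this
    exact tendsto_of_tendsto_of_tendsto_of_le_of_le tendsto_const_nhds h2
      (fun n => (hqn1 n).le) (fun n => (hqn2 n).le)
  have htend2 : Filter.Tendsto (fun n : ℕ => (qn n : ℝ) • x) Filter.atTop (nhds (c • x)) :=
    htend.smul_const x
  refine isClosed_nonneg.mem_of_tendsto htend2 (Filter.Eventually.of_forall fun n => ?_)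
  exact hq (qn n) (by exact_mod_cast (hc.trans (hqn1 n).le))

lemma mySmulMonoLeft {c : ℝ} (hc : 0 ≤ c) {a b : X} (hab : a ≤ b) : c • a ≤ c • b := by
  rw [← sub_nonneg, ← smul_sub]
  exact mySmulNonneg c hc _ (sub_nonneg.mpr hab)

lemma mySmulMonoRight {s t : ℝ} (hst : s ≤ t) {x : X} (hx : 0 ≤ x) : s • x ≤ t • x := by
  rw [← sub_nonneg, ← sub_smul]
  exact mySmulNonneg _ (sub_nonneg.mpr hst) _ hx

lemma myAbsSmulLe (c : ℝ) (x : X) : |c • x| ≤ |c| • |x| := by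
  have key : ∀ y : X, c • y ≤ |c| • |y| := by
    intro y
    rcases le_or_gt 0 c with h | h
    · calc c • y ≤ c • |y| := mySmulMonoLeft h (le_abs_self y)
        _ = |c| • |y| := by rw [abs_of_nonneg h]
    · have : c • y = (-c) • (-y) := by rw [neg_smul, smul_neg, neg_neg]
      rw [this]
      calc (-c) • (-y) ≤ (-c) • |y| := mySmulMonoLeft (by linarith) (neg_le_abs y)
        _ = |c| • |y| := by rw [abs_of_neg h]
  refine abs_le'.mpr ⟨key x, ?_⟩
  have h := key (-x)
  rwa [smul_neg, abs_neg] at h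

lemma myArch {a b : X} (h : ∀ n : ℕ, ((n : ℝ) + 1) • a ≤ b) : a ≤ 0 := by
  have hkey : ∀ n : ℕ, a ≤ (1 / ((n : ℝ) + 1)) • b := by
    intro n
    have hpos : (0 : ℝ) < (n : ℝ) + 1 := by positivity
    have := mySmulMonoLeft (c := 1 / ((n : ℝ) + 1)) (by positivity) (h n)
    rw [one_div]
    rwa [smul_smul, one_div, inv_mul_cancel₀ hpos.ne', one_smul] at this
  have htend : Filter.Tendsto (fun n : ℕ => (1 / ((n : ℝ) + 1)) • b)
      Filter.atTop (nhds (0 : X)) := by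
    have h1 := tendsto_one_div_add_atTop_nhds_zero_nat (𝕜 := ℝ)
    have := h1.smul_const b
    simpa using this
  have hcl : IsClosed {z : X | a ≤ z} := isClosed_le continuous_const continuous_id
  exact hcl.mem_of_tendsto htend (Filter.Eventually.of_forall hkey)

lemma myRankLeOne (htot : ∀ z : X, 0 ≤ z ∨ z ≤ 0) : Module.rank ℝ X ≤ 1 := by
  by_cases hex : ∃ x : X, x ≠ 0
  · obtain ⟨x0, hx0⟩ := hex
    set x := |x0| with hxdef
    have hx : 0 < x := by
      refine (abs_nonneg x0).lt_of_ne fun h => hx0 ?_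
      have h1 : x0 ≤ 0 := (le_abs_self x0).trans h.symm.le
      have h2 : (0 : X) ≤ x0 := by
        have h3 : -x0 ≤ |x0| := neg_le_abs x0
        rw [← h] at h3
        exact neg_nonpos.mp h3
      exact le_antisymm h1 h2
    refine rank_le_one_iff.mpr ⟨x, fun y => ?_⟩
    set S := {t : ℝ | t • x ≤ y} with hS
    have hcomp : ∀ t : ℝ, t • x ≤ y ∨ y ≤ t • x := by
      intro t
      rcases htot (y - t • x) with h | h
      · exact Or.inl (sub_nonneg.mp h)
      · exact Or.inr (sub_nonpos.mp h)
    have hSc : IsClosed S :=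
      isClosed_le (continuous_id.smul continuous_const) continuous_const
    have hSne : S.Nonempty := by
      by_contra hne
      rw [Set.not_nonempty_iff_eq_empty] at hne
      have hnot : ∀ t : ℝ, ¬ t • x ≤ y := by
        intro t ht
        have hmem : t ∈ S := ht
        rw [hne] at hmem
        exact hmem
      have hup : ∀ n : ℕ, ((n : ℝ) + 1) • x ≤ -y := by
        intro n
        have h2 := (hcomp (-((n : ℝ) + 1))).resolve_left (hnot _)
        rw [neg_smul] at h2
        exact le_neg.mp h2
      exact absurd (myArch hup) hx.not_ge
    have hSbdd : BddAbove S := by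
      by_contra hbd
      rw [not_bddAbove_iff] at hbd
      have hup : ∀ n : ℕ, ((n : ℝ) + 1) • x ≤ y := by
        intro n
        obtain ⟨t, htS, htgt⟩ := hbd ((n : ℝ) + 1)
        exact le_trans (mySmulMonoRight htgt.le hx.le) htS
      exact absurd (myArch hup) hx.not_ge
    set c := sSup S with hc
    have hcS : c ∈ S := hSc.csSup_mem hSne hSbdd
    have hyc : y ≤ c • x := by
      have hmem : ∀ n : ℕ, y ≤ (c + 1 / ((n : ℝ) + 1)) • x := by
        intro n
        have hnot : (c + 1 / ((n : ℝ) + 1)) ∉ S := by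
          intro hmem
          have := le_csSup hSbdd hmem
          have hp : (0 : ℝ) < 1 / ((n : ℝ) + 1) := by positivity
          linarith
        exact (hcomp _).resolve_left hnot
      have htend : Filter.Tendsto (fun n : ℕ => (c + 1 / ((n : ℝ) + 1)) • x)
          Filter.atTop (nhds (c • x)) := by
        have h1 : Filter.Tendsto (fun n : ℕ => c + 1 / ((n : ℝ) + 1))
            Filter.atTop (nhds c) := by
          have := tendsto_one_div_add_atTop_nhds_zero_nat (𝕜 := ℝ)
          simpa using (tendsto_const_nhds (x := c) (f := Filter.atTop (α := ℕ))).add this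
        exact h1.smul_const x
      have hcl : IsClosed {z : X | y ≤ z} := isClosed_le continuous_const continuous_id
      exact hcl.mem_of_tendsto htend (Filter.Eventually.of_forall hmem)
    exact ⟨c, le_antisymm hcS hyc⟩
  · push_neg at hex
    exact rank_le_one_iff.mpr ⟨0, fun v => ⟨0, by rw [hex v, smul_zero]⟩⟩

end helpers

theorem stmt3 [NormedAddCommGroup X] [Lattice X] [HasSolidNorm X] [IsOrderedAddMonoid X] [NormedSpace ℝ X]
    (hdim : 1 < Module.rank ℝ X)
    (T : X →L[ℝ] X) (hT : IsPositiveOp T) (hirr : IdealIrreducible T)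
    (l : ℝ) (f : StrongDual ℝ X) (hf : IsPositiveFunc f) (hf0 : f ≠ 0)
    (heig : adjOp T f = l • f) :
    StrictlyPositiveFunc f ∧ 0 < l := by
  classical
  have hpt : ∀ x : X, f (T x) = l * f x := by
    intro x
    have h := congrArg (fun g : StrongDual ℝ X => g x) heig
    simpa [adjOp] using h
  have hfmono : ∀ a b : X, a ≤ b → f a ≤ f b := by
    intro a b hab
    have h := hf _ (sub_nonneg.mpr hab)
    rw [map_sub] at h
    linarith
  have hTmono : ∀ a b : X, a ≤ b → T a ≤ T b := by
    intro a b hab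
    have h := hT _ (sub_nonneg.mpr hab)
    rw [map_sub] at h
    exact sub_nonneg.mp h
  have hTabs : ∀ x : X, |T x| ≤ T |x| := by
    intro x
    refine abs_le'.mpr ⟨hTmono _ _ (le_abs_self x), ?_⟩
    have h := hTmono _ _ (neg_le_abs x)
    rwa [map_neg] at h
  set N : Submodule ℝ X :=
    { carrier := {x : X | f |x| = 0}
      add_mem' := by
        intro a b ha hb
        simp only [Set.mem_setOf_eq] at *
        refine le_antisymm ?_ (hf _ (abs_nonneg _))
        have h1 : f |a + b| ≤ f (|a| + |b|) := hfmono _ _ (myAbsAdd a b)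
        rw [map_add, ha, hb, add_zero] at h1
        exact h1
      zero_mem' := by simp
      smul_mem' := by
        intro c x hx
        simp only [Set.mem_setOf_eq] at *
        refine le_antisymm ?_ (hf _ (abs_nonneg _))
        have h1 : f |c • x| ≤ f (|c| • |x|) := hfmono _ _ (myAbsSmulLe c x)
        rw [map_smul, smul_eq_mul, hx, mul_zero] at h1
        exact h1 } with hNdef
  have hNci : IsClosedIdeal N := by
    constructor
    · have h : (N : Set X) = (fun x : X => f |x|) ⁻¹' {0} := rfl
      rw [h]
      exact IsClosed.preimage (f.continuous.comp myContAbs) isClosed_singleton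
    · intro x y hxy hx
      have hx' : f |x| = 0 := hx
      show f |y| = 0
      refine le_antisymm ?_ (hf _ (abs_nonneg _))
      calc f |y| ≤ f |x| := hfmono _ _ hxy
        _ = 0 := hx'
  have hNinv : ∀ x ∈ N, T x ∈ N := by
    intro x hx
    have hx' : f |x| = 0 := hx
    show f |T x| = 0
    refine le_antisymm ?_ (hf _ (abs_nonneg _))
    calc f |T x| ≤ f (T |x|) := hfmono _ _ (hTabs x)
      _ = l * f |x| := hpt _
      _ = 0 := by rw [hx', mul_zero]
  have hNne : N ≠ ⊤ := by
    intro hNtop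
    apply hf0
    ext x
    have hx : f |x| = 0 := by
      have hm : x ∈ N := hNtop ▸ Submodule.mem_top
      exact hm
    have h1 : f x ≤ 0 := by
      have := hfmono _ _ (le_abs_self x)
      rwa [hx] at this
    have h2 : f (-x) ≤ 0 := by
      have := hfmono _ _ (neg_le_abs x)
      rwa [hx] at this
    rw [map_neg] at h2
    simp only [ContinuousLinearMap.zero_apply]
    linarith
  have hNbot : N = ⊥ := (hirr N hNci hNinv).resolve_right hNne
  have hstrict : StrictlyPositiveFunc f := by
    intro x hx
    rcases (hf x hx.le).lt_or_eq with h | h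
    · exact h
    · exfalso
      have hmem : x ∈ N := by
        show f |x| = 0
        rw [abs_of_nonneg hx.le, ← h]
      rw [hNbot, Submodule.mem_bot] at hmem
      exact hx.ne' hmem
  refine ⟨hstrict, ?_⟩
  by_contra hl
  push_neg at hl
  have hT0 : ∀ x : X, T x = 0 := by
    have hTpos0 : ∀ x : X, 0 ≤ x → T x = 0 := by
      intro x hx
      rcases hx.eq_or_lt with h | h
      · rw [← h, map_zero]
      · have h1 : f (T x) = l * f x := hpt x
        have h2 : 0 ≤ f (T x) := hf _ (hT x hx)
        have h3 : l * f x ≤ 0 := by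
          have := hf x hx
          nlinarith
        have h4 : f (T x) = 0 := le_antisymm (h1.trans_le h3) h2
        rcases (hT x hx).eq_or_lt with h5 | h5
        · exact h5.symm
        · exact absurd h4 (hstrict _ h5).ne'
    intro x
    calc T x = T (x⁺ - x⁻) := by rw [posPart_sub_negPart]
      _ = T x⁺ - T x⁻ := map_sub T _ _
      _ = 0 := by
        rw [hTpos0 _ (posPart_nonneg x), hTpos0 _ (negPart_nonneg x), sub_zero]
  by_cases htot : ∀ z : X, 0 ≤ z ∨ z ≤ 0
  · exact absurd (myRankLeOne htot) hdim.not_ge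
  · push_neg at htot
    obtain ⟨z, hz1, hz2⟩ := htot
    set a := z⁺ with hadef
    set b := z⁻ with hbdef
    have ha0 : 0 ≤ a := posPart_nonneg z
    have ha : a ≠ 0 := fun h => hz2 (posPart_eq_zero.mp h)
    have hb : b ≠ 0 := fun h => hz1 (negPart_eq_zero.mp h)
    have hab : a ⊓ b = 0 := posPart_inf_negPart_eq_zero z
    have hkey : ∀ (c : ℝ) (u : X), |u| ⊓ a = 0 → |c • u| ⊓ a = 0 := by
      intro c u hu
      refine le_antisymm ?_ (le_inf (abs_nonneg _) ha0)
      calc |c • u| ⊓ a ≤ (|c| • |u|) ⊓ a := inf_le_inf_right a (myAbsSmulLe c u)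
        _ ≤ ((⌈|c|⌉₊ : ℝ) • |u|) ⊓ a :=
            inf_le_inf_right a (mySmulMonoRight (Nat.le_ceil _) (abs_nonneg u))
        _ = (⌈|c|⌉₊ • |u|) ⊓ a := by rw [Nat.cast_smul_eq_nsmul]
        _ = 0 := myInfNsmul (abs_nonneg u) ha0 hu _
    set J : Submodule ℝ X :=
      { carrier := {y : X | |y| ⊓ a = 0}
        add_mem' := by
          intro u v hu hv
          simp only [Set.mem_setOf_eq] at *
          refine le_antisymm ?_ (le_inf (abs_nonneg _) ha0)
          calc |u + v| ⊓ a ≤ (|u| + |v|) ⊓ a := inf_le_inf_right a (myAbsAdd u v)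
            _ ≤ |u| ⊓ a + |v| ⊓ a := myRiesz _ _ _ (abs_nonneg u) (abs_nonneg v) ha0
            _ = 0 := by rw [hu, hv, add_zero]
        zero_mem' := by
          simp only [Set.mem_setOf_eq, abs_zero]
          exact inf_eq_left.mpr ha0
        smul_mem' := fun c u hu => hkey c u hu } with hJdef
    have hJci : IsClosedIdeal J := by
      constructor
      · have h : (J : Set X) = (fun y : X => |y| ⊓ a) ⁻¹' {0} := rfl
        rw [h]
        exact IsClosed.preimage (myContAbs.inf continuous_const) isClosed_singleton
      · intro u v huv hu
        have hu' : |u| ⊓ a = 0 := hu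
        show |v| ⊓ a = 0
        refine le_antisymm ?_ (le_inf (abs_nonneg _) ha0)
        calc |v| ⊓ a ≤ |u| ⊓ a := inf_le_inf_right a huv
          _ = 0 := hu'
    have hJinv : ∀ y ∈ J, T y ∈ J := by
      intro y _
      rw [hT0 y]
      exact J.zero_mem
    rcases hirr J hJci hJinv with h | h
    · have hbJ : b ∈ J := by
        show |b| ⊓ a = 0
        rw [abs_of_nonneg (negPart_nonneg z), inf_comm, hab]
      rw [h, Submodule.mem_bot] at hbJ
      exact hb hbJ
    · have haJ : a ∈ J := h ▸ Submodule.mem_top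
      have hcon : |a| ⊓ a = 0 := haJ
      rw [abs_of_nonneg ha0, inf_idem] at hcon
      exact ha hcon
end

section
/- Let T be a band irreducible, σ-order continuous positive operator on a real Banach lattice X with dim X > 1. If Tx = λx for some x > 0 and λ ∈ ℝ, then x is a weak order unit and λ > 0. -/
open scoped ENNReal

variable {X : Type*}

namespace Stmt5Aux

variable [NormedAddCommGroup X] [Lattice X] [HasSolidNorm X] [IsOrderedAddMonoid X] [NormedSpace ℝ X]

omit [NormedSpace ℝ X] in
lemma inf_nonneg' {a b : X} (ha : 0 ≤ a) (hb : 0 ≤ b) : 0 ≤ a ⊓ b := le_inf ha hb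

omit [NormedSpace ℝ X] in
lemma eq_zero_of_abs_eq_zero {a : X} (h : |a| = 0) : a = 0 := by
  have h1 : a ≤ 0 := h ▸ le_abs_self a
  have h2 : -a ≤ 0 := h ▸ neg_le_abs a
  exact le_antisymm h1 (neg_nonpos.mp h2)

omit [NormedSpace ℝ X] in
lemma disj_add {u v w : X} (hu : 0 ≤ u) (hv : 0 ≤ v) (hw : 0 ≤ w)
    (h1 : u ⊓ w = 0) (h2 : v ⊓ w = 0) : (u + v) ⊓ w = 0 := by
  have h3 : (u + v) ⊓ w ≤ (u + v) ⊓ (u + w) := by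
    refine le_inf inf_le_left (inf_le_right.trans ?_)
    exact le_add_of_nonneg_left hu
  rw [← add_inf v w u, h2, add_zero] at h3
  have h4 : (u + v) ⊓ w ≤ u ⊓ w := le_inf h3 inf_le_right
  rw [h1] at h4
  exact le_antisymm h4 (inf_nonneg' (add_nonneg hu hv) hw)

omit [NormedSpace ℝ X] in
lemma disj_nsmul (n : ℕ) {u w : X} (hu : 0 ≤ u) (hw : 0 ≤ w)
    (h : u ⊓ w = 0) : (n • u) ⊓ w = 0 := by
  induction n with
  | zero => rw [zero_nsmul]; exact inf_eq_left.mpr hw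
  | succ k ih =>
    rw [succ_nsmul]
    exact disj_add (nsmul_nonneg hu k) hu hw ih h

omit [NormedSpace ℝ X] in
lemma nonneg_of_nsmul_nonneg {z : X} {n : ℕ} (hn : 0 < n) (h : 0 ≤ n • z) : 0 ≤ z := by
  have hd : z⁺ ⊓ z⁻ = 0 := posPart_inf_negPart_eq_zero z
  have h1 : (n • z⁺) ⊓ z⁻ = 0 := disj_nsmul n (posPart_nonneg z) (negPart_nonneg z) hd
  have h3 : n • z⁻ ≤ n • z⁺ := by
    have h5 : (0 : X) ≤ n • (z⁺ - z⁻) := by rw [posPart_sub_negPart]; exact h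
    rw [nsmul_sub, sub_nonneg] at h5
    exact h5
  have h2 : z⁻ ≤ n • z⁺ := by
    refine le_trans ?_ h3
    obtain ⟨k, rfl⟩ := Nat.exists_eq_succ_of_ne_zero hn.ne'
    rw [succ_nsmul]
    exact le_add_of_nonneg_left (nsmul_nonneg (negPart_nonneg z) k)
  have h6 : z⁻ = 0 := by
    have h7 := inf_eq_left.mpr h2
    rw [inf_comm] at h7
    rw [← h7, h1]
  exact negPart_eq_zero.mp h6

lemma rat_smul_nonneg {q : ℚ} (hq : 0 ≤ q) {y : X} (hy : 0 ≤ y) : 0 ≤ (q : ℝ) • y := by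
  refine nonneg_of_nsmul_nonneg (n := q.den) q.den_pos ?_
  have h1 : (q.den : ℕ) • ((q : ℝ) • y) = ((q.den : ℝ) * (q : ℝ)) • y := by
    rw [← Nat.cast_smul_eq_nsmul ℝ, smul_smul]
  have h2 : ((q.den : ℝ)) * (q : ℝ) = (q.num : ℝ) := by rw [Rat.cast_def]; field_simp
  have h3 : (q.num : ℝ) = ((q.num.toNat : ℕ) : ℝ) := by
    exact_mod_cast (congrArg (fun z : ℤ => (z : ℝ))
      (Int.toNat_of_nonneg (Rat.num_nonneg.mpr hq))).symm
  rw [h1, h2, h3, Nat.cast_smul_eq_nsmul]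
  exact nsmul_nonneg hy _

lemma rsmul_nonneg {c : ℝ} (hc : 0 ≤ c) {y : X} (hy : 0 ≤ y) : 0 ≤ c • y := by
  have hq : ∀ n : ℕ, ∃ q : ℚ, c < (q : ℝ) ∧ (q : ℝ) < c + 1 / (n + 1) := by
    intro n
    exact exists_rat_btwn (lt_add_of_pos_right c (by positivity))
  choose q hq1 hq2 using hq
  have htend : Filter.Tendsto (fun n : ℕ => ((q n : ℝ))) Filter.atTop (nhds c) := by
    have h2 : Filter.Tendsto (fun n : ℕ => c + 1 / ((n : ℝ) + 1)) Filter.atTop (nhds (c + 0)) :=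
      Filter.Tendsto.const_add c tendsto_one_div_add_atTop_nhds_zero_nat
    rw [add_zero] at h2
    exact tendsto_of_tendsto_of_tendsto_of_le_of_le tendsto_const_nhds h2
      (fun n => (hq1 n).le) (fun n => (hq2 n).le)
  have htend2 : Filter.Tendsto (fun n : ℕ => ((q n : ℝ)) • y) Filter.atTop (nhds (c • y)) :=
    htend.smul_const y
  refine ge_of_tendsto' htend2 (fun n => ?_)
  exact rat_smul_nonneg (by exact_mod_cast (hc.trans_lt (hq1 n)).le) hy

lemma rsmul_mono {c : ℝ} (hc : 0 ≤ c) {a b : X} (h : a ≤ b) : c • a ≤ c • b := by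
  have h1 := rsmul_nonneg hc (sub_nonneg.mpr h)
  rw [smul_sub, sub_nonneg] at h1
  exact h1

lemma rsmul_nonpos {c : ℝ} (hc : c ≤ 0) {y : X} (hy : 0 ≤ y) : c • y ≤ 0 := by
  have h1 := rsmul_nonneg (neg_nonneg.mpr hc) hy
  rw [neg_smul, le_neg, neg_zero] at h1
  exact h1

lemma abs_smul_le (c : ℝ) (y : X) : |c • y| ≤ |c| • |y| := by
  refine sup_le ?_ ?_
  · rcases le_or_gt 0 c with hc | hc
    · rw [abs_of_nonneg hc]; exact rsmul_mono hc (le_abs_self y)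
    · rw [abs_of_neg hc]
      have h1 : c • y = (-c) • (-y) := by simp
      rw [h1]
      exact rsmul_mono (by linarith) (neg_le_abs y)
  · rcases le_or_gt 0 c with hc | hc
    · rw [abs_of_nonneg hc]
      have h1 : -(c • y) = c • (-y) := by simp
      rw [h1]
      exact rsmul_mono hc (neg_le_abs y)
    · rw [abs_of_neg hc]
      have h1 : -(c • y) = (-c) • y := by simp
      rw [h1]
      exact rsmul_mono (by linarith) (le_abs_self y)

/-- The disjoint complement of a set, as a submodule. -/
def dperp (S : Set X) : Submodule ℝ X where
  carrier := {y : X | ∀ z ∈ S, |y| ⊓ |z| = 0}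
  zero_mem' := by
    intro z hz
    simpa using inf_eq_left.mpr (abs_nonneg z)
  add_mem' := by
    intro a b ha hb z hz
    have key : (|a| + |b|) ⊓ |z| = 0 :=
      disj_add (abs_nonneg a) (abs_nonneg b) (abs_nonneg z) (ha z hz) (hb z hz)
    have h2 : |a + b| ⊓ |z| ≤ (|a| + |b|) ⊓ |z| := inf_le_inf_right _ (abs_add_le a b)
    rw [key] at h2
    exact le_antisymm h2 (inf_nonneg' (abs_nonneg _) (abs_nonneg _))
  smul_mem' := by
    intro c y hy z hz
    set n : ℕ := ⌈|c|⌉₊ with hn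
    have h1 : |c • y| ≤ n • |y| := by
      refine (abs_smul_le c y).trans ?_
      rw [← Nat.cast_smul_eq_nsmul ℝ]
      have h4 : (0 : X) ≤ ((n : ℝ) - |c|) • |y| :=
        rsmul_nonneg (sub_nonneg.mpr (Nat.le_ceil _)) (abs_nonneg y)
      rw [sub_smul, sub_nonneg] at h4
      exact h4
    have h2 : (n • |y|) ⊓ |z| = 0 := disj_nsmul n (abs_nonneg y) (abs_nonneg z) (hy z hz)
    have h3 : |c • y| ⊓ |z| ≤ (n • |y|) ⊓ |z| := inf_le_inf_right _ h1
    rw [h2] at h3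
    exact le_antisymm h3 (inf_nonneg' (abs_nonneg _) (abs_nonneg _))

lemma mem_dperp {S : Set X} {y : X} : y ∈ dperp S ↔ ∀ z ∈ S, |y| ⊓ |z| = 0 := Iff.rfl

lemma isBand_dperp (S : Set X) : IsBand (dperp (X := X) S) := by
  constructor
  · intro a y h ha z hz
    have h2 : |y| ⊓ |z| ≤ |a| ⊓ |z| := inf_le_inf_right _ h
    rw [mem_dperp.mp ha z hz] at h2
    exact le_antisymm h2 (inf_nonneg' (abs_nonneg _) (abs_nonneg _))
  · intro A s hA hlub
    rcases A.eq_empty_or_nonempty with rfl | ⟨a₀, ha₀⟩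
    · have hall : ∀ v : X, 0 ≤ v → v = 0 := by
        intro v hv
        have h1 : s ≤ s - v := hlub.2 (by simp [upperBounds])
        have h2 : v ≤ 0 := by
          have h3 := sub_nonneg.mpr h1
          simpa using h3
        exact le_antisymm h2 hv
      intro z hz
      exact hall _ (inf_nonneg' (abs_nonneg _) (abs_nonneg _))
    · intro z hz
      have hwn : 0 ≤ |z| := abs_nonneg z
      have ha₀s : a₀ ≤ s := hlub.1 ha₀
      set c := (s - a₀) ⊓ |z| with hc
      have hc0 : 0 ≤ c := inf_nonneg' (sub_nonneg.mpr ha₀s) hwn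
      have hkey : ∀ a ∈ A, a ≤ s - c := by
        intro a ha
        have h1 : (|a| + |a₀|) ⊓ |z| = 0 :=
          disj_add (abs_nonneg a) (abs_nonneg a₀) hwn (hA ha z hz) (hA ha₀ z hz)
        have hple : (a - a₀)⁺ ≤ |a| + |a₀| := by
          refine sup_le ?_ (add_nonneg (abs_nonneg _) (abs_nonneg _))
          calc a - a₀ ≤ |a - a₀| := le_abs_self _
          _ = |a + -a₀| := by rw [sub_eq_add_neg]
          _ ≤ |a| + |(-a₀)| := abs_add_le _ _
          _ = |a| + |a₀| := by rw [abs_neg]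
        have hd : (a - a₀)⁺ ⊓ c = 0 := by
          have h2 : (a - a₀)⁺ ⊓ c ≤ (|a| + |a₀|) ⊓ |z| :=
            inf_le_inf hple inf_le_right
          rw [h1] at h2
          exact le_antisymm h2 (inf_nonneg' (posPart_nonneg _) hc0)
        have hsum : (a - a₀)⁺ + c ≤ s - a₀ := by
          have heq : (a - a₀)⁺ + c = (a - a₀)⁺ ⊔ c := by
            have h8 := inf_add_sup ((a - a₀)⁺) c
            rw [hd, zero_add] at h8
            exact h8.symm
          rw [heq]
          refine sup_le ?_ inf_le_left
          exact sup_le (sub_le_sub_right (hlub.1 ha) a₀) (sub_nonneg.mpr ha₀s)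
        have h10 : a - a₀ ≤ s - a₀ - c :=
          (le_posPart (a - a₀)).trans (le_sub_iff_add_le.mpr hsum)
        calc a = a - a₀ + a₀ := by abel
        _ ≤ s - a₀ - c + a₀ := add_le_add_left h10 a₀
        _ = s - c := by abel
      have hs : s ≤ s - c := hlub.2 hkey
      have hcle : c ≤ 0 := by
        have h11 := sub_nonneg.mpr hs
        simpa using h11
      have hc00 : (s - a₀) ⊓ |z| = 0 := le_antisymm hcle hc0
      have h5 : |s| ≤ (s - a₀) + |a₀| := by
        refine sup_le ?_ ?_
        · calc s = (s - a₀) + a₀ := by abel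
          _ ≤ (s - a₀) + |a₀| := add_le_add_right (le_abs_self a₀) _
        · calc -s ≤ -a₀ := neg_le_neg ha₀s
          _ ≤ |a₀| := neg_le_abs a₀
          _ ≤ (s - a₀) + |a₀| := le_add_of_nonneg_left (sub_nonneg.mpr ha₀s)
      have h7 : ((s - a₀) + |a₀|) ⊓ |z| = 0 :=
        disj_add (sub_nonneg.mpr ha₀s) (abs_nonneg a₀) hwn hc00 (hA ha₀ z hz)
      have h8 : |s| ⊓ |z| ≤ ((s - a₀) + |a₀|) ⊓ |z| := inf_le_inf_right _ h5
      rw [h7] at h8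
      exact le_antisymm h8 (inf_nonneg' (abs_nonneg _) hwn)

lemma tendsto_inv_smul (y : X) :
    Filter.Tendsto (fun n : ℕ => (1 / ((n : ℝ) + 1)) • y) Filter.atTop (nhds 0) := by
  have h := (tendsto_one_div_add_atTop_nhds_zero_nat :
    Filter.Tendsto (fun n : ℕ => 1 / ((n : ℝ) + 1)) Filter.atTop (nhds 0)).smul_const y
  rwa [zero_smul] at h

lemma isLUB_inf_smul {x y : X} (hx : 0 < x) (hy : 0 ≤ y)
    (hmin : ∀ w : X, 0 ≤ w → w ≤ y → w ⊓ x = 0 → w = 0) :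
    IsLUB (Set.range fun n : ℕ => y ⊓ (n : ℝ) • x) y := by
  constructor
  · rintro _ ⟨n, rfl⟩
    exact inf_le_left
  · intro u hu
    have hu' : ∀ n : ℕ, y ⊓ (n : ℝ) • x ≤ u ⊓ y :=
      fun n => le_inf (hu ⟨n, rfl⟩) inf_le_left
    have hu'0 : 0 ≤ u ⊓ y := by
      have h := hu' 0
      simpa [inf_eq_right.mpr hy] using h
    set w := y - u ⊓ y with hwdef
    have hw0 : 0 ≤ w := sub_nonneg.mpr inf_le_right
    have hwy : w ≤ y := by
      rw [hwdef]
      exact sub_le_self y hu'0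
    set a := w ⊓ x with hadef
    have ha0 : 0 ≤ a := inf_nonneg' hw0 hx.le
    have hax : a ≤ x := inf_le_right
    have haw : a ≤ w := inf_le_left
    have key : ∀ n : ℕ, n • a ≤ y := by
      intro n
      induction n with
      | zero => simpa using hy
      | succ k ih =>
        have h1 : k • a ≤ y ⊓ (k : ℝ) • x := by
          refine le_inf ih ?_
          rw [Nat.cast_smul_eq_nsmul]
          exact nsmul_le_nsmul_right hax k
        have h2 : y ⊓ (k : ℝ) • x ≤ y - w := by
          have h3 := hu' k
          have heq : u ⊓ y = y - w := by rw [hwdef]; abel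
          rwa [heq] at h3
        calc (k + 1) • a = k • a + a := succ_nsmul a k
        _ ≤ (y - w) + w := add_le_add (h1.trans h2) haw
        _ = y := by abel
    have ha_le : ∀ n : ℕ, a ≤ (1 / ((n : ℝ) + 1)) • y := by
      intro n
      have h := key (n + 1)
      have h2 : (1 / ((n : ℝ) + 1)) • ((n + 1 : ℕ) • a) ≤ (1 / ((n : ℝ) + 1)) • y :=
        rsmul_mono (by positivity) h
      have h3 : (1 / ((n : ℝ) + 1)) • ((n + 1 : ℕ) • a) = a := by
        rw [← Nat.cast_smul_eq_nsmul ℝ (n + 1) a, smul_smul, Nat.cast_add, Nat.cast_one,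
          one_div, inv_mul_cancel₀ (by positivity), one_smul]
      rwa [h3] at h2
    have ha_le0 : a ≤ 0 := ge_of_tendsto' (tendsto_inv_smul y) ha_le
    have ha : a = 0 := le_antisymm ha_le0 ha0
    have hw : w = 0 := hmin w hw0 hwy ha
    have h9 : y = u ⊓ y := by
      have h10 : y - u ⊓ y = 0 := by rw [← hwdef, hw]
      exact sub_eq_zero.mp h10
    rw [h9]
    exact inf_le_left

end Stmt5Aux

theorem stmt5 [NormedAddCommGroup X] [Lattice X] [HasSolidNorm X] [IsOrderedAddMonoid X] [NormedSpace ℝ X]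
    (hdim : 1 < Module.rank ℝ X)
    (T : X →L[ℝ] X) (hT : IsPositiveOp T) (hirr : BandIrreducible T)
    (hoc : SigmaOrderContinuousOp T)
    (l : ℝ) (x : X) (hx : 0 < x) (heig : T x = l • x) :
    WeakUnit x ∧ 0 < l := by
  classical
  have hTx : 0 ≤ T x := hT x hx.le
  have hl0 : 0 ≤ l := by
    by_contra hneg
    push_neg at hneg
    have h1 : 0 ≤ l • x := heig ▸ hTx
    have h2 : l⁻¹ • (l • x) ≤ 0 := Stmt5Aux.rsmul_nonpos (inv_nonpos.mpr hneg.le) h1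
    rw [smul_smul, inv_mul_cancel₀ hneg.ne, one_smul] at h2
    exact hx.not_ge h2
  have hTmono : ∀ a b : X, a ≤ b → T a ≤ T b := by
    intro a b h
    have h1 := hT (b - a) (sub_nonneg.mpr h)
    rw [map_sub, sub_nonneg] at h1
    exact h1
  -- general LUB transfer through T
  have hTlub : ∀ y : X, 0 ≤ y →
      (∀ w : X, 0 ≤ w → w ≤ y → w ⊓ x = 0 → w = 0) →
      IsLUB (Set.range fun n : ℕ => T (y ⊓ (n : ℝ) • x)) (T y) := by
    intro y hy hmin
    have hlub := Stmt5Aux.isLUB_inf_smul hx hy hmin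
    have hant : Antitone (fun n : ℕ => y - y ⊓ (n : ℝ) • x) := by
      intro n m hnm
      simp only
      refine sub_le_sub_left (inf_le_inf_left y ?_) y
      have h1 : (0 : X) ≤ ((m : ℝ) - (n : ℝ)) • x :=
        Stmt5Aux.rsmul_nonneg (sub_nonneg.mpr (by exact_mod_cast hnm)) hx.le
      rw [sub_smul, sub_nonneg] at h1
      exact h1
    have hglb : IsGLB (Set.range fun n : ℕ => y - y ⊓ (n : ℝ) • x) 0 := by
      constructor
      · rintro _ ⟨n, rfl⟩
        exact sub_nonneg.mpr inf_le_left
      · intro b hb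
        have hub : (y - b) ∈ upperBounds (Set.range fun n : ℕ => y ⊓ (n : ℝ) • x) := by
          rintro _ ⟨n, rfl⟩
          exact le_sub_comm.mp (hb ⟨n, rfl⟩)
        have h1 : y ≤ y - b := hlub.2 hub
        have h2 := le_sub_comm.mp h1
        simpa using h2
    have hglbT := hoc _ hant hglb
    constructor
    · rintro _ ⟨n, rfl⟩
      exact hTmono _ _ inf_le_left
    · intro b hb
      have hlb : (T y - b) ∈ lowerBounds
          (Set.range fun n : ℕ => T (y - y ⊓ (n : ℝ) • x)) := by
        rintro _ ⟨n, rfl⟩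
        show T y - b ≤ T (y - y ⊓ (n : ℝ) • x)
        rw [map_sub]
        exact sub_le_sub_left (hb ⟨n, rfl⟩) (T y)
      have h1 : T y - b ≤ 0 := hglbT.2 hlb
      exact sub_nonpos.mp h1
  set S : Set X := {z : X | |z| ⊓ x = 0} with hS
  set J : Submodule ℝ X := Stmt5Aux.dperp S with hJ
  have hJband : IsBand J := Stmt5Aux.isBand_dperp S
  have hxJ : x ∈ J := by
    rw [hJ, Stmt5Aux.mem_dperp]
    intro z hz
    rw [abs_of_nonneg hx.le, inf_comm]
    exact hz
  have hminJ : ∀ y : X, 0 ≤ y → y ∈ J → ∀ w : X, 0 ≤ w → w ≤ y → w ⊓ x = 0 → w = 0 := by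
    intro y hy hyJ w hw0 hwy hwx
    have hwJ : w ∈ J := by
      refine hJband.1 y w ?_ hyJ
      rw [abs_of_nonneg hw0, abs_of_nonneg hy]
      exact hwy
    have hwS : w ∈ S := by
      rw [hS]
      simpa [abs_of_nonneg hw0] using hwx
    have h1 := Stmt5Aux.mem_dperp.mp hwJ w hwS
    rw [inf_idem] at h1
    exact Stmt5Aux.eq_zero_of_abs_eq_zero h1
  have hTinvPos : ∀ y : X, 0 ≤ y → y ∈ J → T y ∈ J := by
    intro y hy hyJ
    have hlubT := hTlub y hy (hminJ y hy hyJ)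
    refine hJband.2 _ _ ?_ hlubT
    rintro _ ⟨n, rfl⟩
    have hyn0 : 0 ≤ y ⊓ (n : ℝ) • x :=
      Stmt5Aux.inf_nonneg' hy (Stmt5Aux.rsmul_nonneg (Nat.cast_nonneg n) hx.le)
    have h1 : 0 ≤ T (y ⊓ (n : ℝ) • x) := hT _ hyn0
    have h2 : T (y ⊓ (n : ℝ) • x) ≤ ((n : ℝ) * l) • x := by
      have h3 := hTmono _ _ (inf_le_right : y ⊓ (n : ℝ) • x ≤ (n : ℝ) • x)
      rwa [map_smul, heig, smul_smul] at h3
    have h3 : ((n : ℝ) * l) • x ∈ J := J.smul_mem _ hxJ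
    refine hJband.1 _ _ ?_ h3
    rw [abs_of_nonneg h1,
      abs_of_nonneg (Stmt5Aux.rsmul_nonneg (mul_nonneg (Nat.cast_nonneg n) hl0) hx.le)]
    exact h2
  have hTinv : ∀ y ∈ J, T y ∈ J := by
    intro y hyJ
    have hyabs : |y| ∈ J := hJband.1 y |y| (by rw [abs_abs]) hyJ
    have hTabs : T |y| ∈ J := hTinvPos _ (abs_nonneg y) hyabs
    refine hJband.1 _ _ ?_ hTabs
    have h0 : 0 ≤ T |y| := hT _ (abs_nonneg y)
    rw [abs_of_nonneg h0]
    refine sup_le (hTmono _ _ (le_abs_self y)) ?_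
    rw [← map_neg]
    exact hTmono _ _ (neg_le_abs y)
  have hJtop : J = ⊤ := by
    rcases hirr J hJband hTinv with hbot | htop
    · exfalso
      have h1 : x ∈ (⊥ : Submodule ℝ X) := hbot ▸ hxJ
      exact hx.ne' (by simpa using h1)
    · exact htop
  have hwu : WeakUnit x := by
    refine ⟨hx, fun y hy => ?_⟩
    have hyJ : y ∈ J := hJtop ▸ Submodule.mem_top
    have h1 := Stmt5Aux.mem_dperp.mp hyJ y hy
    rw [inf_idem] at h1
    exact Stmt5Aux.eq_zero_of_abs_eq_zero h1
  refine ⟨hwu, ?_⟩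
  rcases hl0.lt_or_eq with hl | hl
  · exact hl
  exfalso
  have hTx0 : T x = 0 := by rw [heig, ← hl, zero_smul]
  have hminAll : ∀ y : X, 0 ≤ y → ∀ w : X, 0 ≤ w → w ≤ y → w ⊓ x = 0 → w = 0 := by
    intro y _ w hw0 _ hwx
    refine hwu.2 w ?_
    rwa [abs_of_nonneg hw0]
  have hTzero : ∀ y : X, T y = 0 := by
    have hpos : ∀ y : X, 0 ≤ y → T y = 0 := by
      intro y hy
      have hlubT := hTlub y hy (hminAll y hy)
      have hub : (0 : X) ∈ upperBounds (Set.range fun n : ℕ => T (y ⊓ (n : ℝ) • x)) := by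
        rintro _ ⟨n, rfl⟩
        have h2 : T (y ⊓ (n : ℝ) • x) ≤ 0 := by
          have h3 := hTmono _ _ (inf_le_right : y ⊓ (n : ℝ) • x ≤ (n : ℝ) • x)
          rwa [map_smul, hTx0, smul_zero] at h3
        exact h2
      exact le_antisymm (hlubT.2 hub) (hT y hy)
    intro y
    have h1 : T y = T y⁺ - T y⁻ := by rw [← map_sub, posPart_sub_negPart]
    rw [h1, hpos _ (posPart_nonneg y), hpos _ (negPart_nonneg y), sub_zero]
  by_cases hcase : ∃ v : X, v⁺ ≠ 0 ∧ v⁻ ≠ 0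
  · obtain ⟨v, hvp, hvn⟩ := hcase
    set K : Submodule ℝ X := Stmt5Aux.dperp {v⁺} with hK
    have hKband : IsBand K := Stmt5Aux.isBand_dperp {v⁺}
    have hKinv : ∀ y ∈ K, T y ∈ K := by
      intro y _
      rw [hTzero y]
      exact K.zero_mem
    have hvnK : v⁻ ∈ K := by
      rw [hK, Stmt5Aux.mem_dperp]
      intro z hz
      rw [Set.mem_singleton_iff] at hz
      subst hz
      rw [abs_of_nonneg (negPart_nonneg v), abs_of_nonneg (posPart_nonneg v), inf_comm]
      exact posPart_inf_negPart_eq_zero v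
    rcases hirr K hKband hKinv with hbot | htop
    · have h1 : v⁻ ∈ (⊥ : Submodule ℝ X) := hbot ▸ hvnK
      exact hvn (by simpa using h1)
    · have hvpK : v⁺ ∈ K := htop ▸ Submodule.mem_top
      have h1 := Stmt5Aux.mem_dperp.mp hvpK v⁺ rfl
      rw [inf_idem] at h1
      exact hvp (Stmt5Aux.eq_zero_of_abs_eq_zero h1)
  · push_neg at hcase
    have htot : ∀ a b : X, a ≤ b ∨ b ≤ a := by
      intro a b
      rcases eq_or_ne ((a - b)⁺) 0 with h | h
      · left
        have h1 := posPart_eq_zero.mp h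
        exact sub_nonpos.mp h1
      · right
        have h2 : (a - b)⁻ = 0 := hcase (a - b) h
        exact sub_nonneg.mp (negPart_eq_zero.mp h2)
    have harch : ∀ z : X, ∃ n : ℕ, z ≤ (n : ℝ) • x := by
      intro z
      by_contra hcon
      push_neg at hcon
      have hxle : ∀ n : ℕ, x ≤ (1 / ((n : ℝ) + 1)) • z := by
        intro n
        have h1 : ((n : ℝ) + 1) • x ≤ z := by
          have h2 : ((n + 1 : ℕ) : ℝ) • x ≤ z := (htot z _).resolve_left (hcon (n + 1))
          push_cast at h2
          exact h2
        rw [one_div]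
        have h3 := Stmt5Aux.rsmul_mono (show (0 : ℝ) ≤ ((n : ℝ) + 1)⁻¹ by positivity) h1
        rwa [smul_smul, inv_mul_cancel₀ (by positivity), one_smul] at h3
      exact hx.not_ge (ge_of_tendsto' (Stmt5Aux.tendsto_inv_smul z) hxle)
    have hscalar : ∀ r s : ℝ, r • x ≤ s • x → r ≤ s := by
      intro r s h
      by_contra hrs
      push_neg at hrs
      have h1 : (0 : X) ≤ (s - r) • x := by
        have h2 := sub_nonneg.mpr h
        rwa [← sub_smul] at h2
      have h3 : (s - r)⁻¹ • ((s - r) • x) ≤ 0 :=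
        Stmt5Aux.rsmul_nonpos (inv_nonpos.mpr (by linarith)) h1
      rw [smul_smul, inv_mul_cancel₀ (sub_ne_zero.mpr hrs.ne), one_smul] at h3
      exact hx.not_ge h3
    have hspan : ∀ y : X, ∃ r : ℝ, r • x = y := by
      intro y
      set Sr : Set ℝ := {r : ℝ | r • x ≤ y} with hSrdef
      have hne : Sr.Nonempty := by
        obtain ⟨n, hn⟩ := harch (-y)
        refine ⟨-(n : ℝ), ?_⟩
        simp only [hSrdef, Set.mem_setOf_eq, neg_smul]
        exact neg_le.mp hn
      obtain ⟨m, hm⟩ := harch y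
      have hbdd : BddAbove Sr := ⟨(m : ℝ), fun r hr => hscalar r m (hr.trans hm)⟩
      set t := sSup Sr with ht
      have hsmono : ∀ r s : ℝ, r ≤ s → r • x ≤ s • x := by
        intro r s h
        have h1 : (0 : X) ≤ (s - r) • x := Stmt5Aux.rsmul_nonneg (by linarith) hx.le
        rw [sub_smul, sub_nonneg] at h1
        exact h1
      have htle : t • x ≤ y := by
        have hseq : ∀ n : ℕ, (t - 1 / ((n : ℝ) + 1)) • x ≤ y := by
          intro n
          obtain ⟨r, hrS, hrgt⟩ := exists_lt_of_lt_csSup hne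
            (show t - 1 / ((n : ℝ) + 1) < t from sub_lt_self t (by positivity))
          exact (hsmono _ _ hrgt.le).trans hrS
        have htendsto : Filter.Tendsto (fun n : ℕ => (t - 1 / ((n : ℝ) + 1)) • x)
            Filter.atTop (nhds (t • x)) := by
          have h1 : Filter.Tendsto (fun n : ℕ => t - 1 / ((n : ℝ) + 1))
              Filter.atTop (nhds (t - 0)) :=
            tendsto_const_nhds.sub tendsto_one_div_add_atTop_nhds_zero_nat
          rw [sub_zero] at h1
          exact h1.smul_const x
        exact le_of_tendsto' htendsto hseq
      have hd : y - t • x = 0 := by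
        by_contra hdne
        have hd0 : 0 ≤ y - t • x := sub_nonneg.mpr htle
        have hex : ∃ n : ℕ, (1 / ((n : ℝ) + 1)) • x ≤ y - t • x := by
          by_contra hcon
          push_neg at hcon
          have hle2 : ∀ n : ℕ, y - t • x ≤ (1 / ((n : ℝ) + 1)) • x :=
            fun n => (htot _ _).resolve_right (hcon n)
          have h4 : y - t • x ≤ 0 := ge_of_tendsto' (Stmt5Aux.tendsto_inv_smul x) hle2
          exact hdne (le_antisymm h4 hd0)
        obtain ⟨n, hn⟩ := hex
        have h5 : (t + 1 / ((n : ℝ) + 1)) • x ≤ y := by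
          rw [add_smul]
          calc t • x + (1 / ((n : ℝ) + 1)) • x ≤ t • x + (y - t • x) :=
            add_le_add_right hn _
          _ = y := by abel
        have h6 : t + 1 / ((n : ℝ) + 1) ≤ t := le_csSup hbdd h5
        have h7 : (0 : ℝ) < 1 / ((n : ℝ) + 1) := by positivity
        linarith
      exact ⟨t, (sub_eq_zero.mp hd).symm⟩
    have hrank : Module.rank ℝ X ≤ 1 := rank_le_one_iff.mpr ⟨x, hspan⟩
    exact hdim.not_ge hrank
end

section
/- Let T be a nonzero positive operator on a real Banach lattice with Tx₀ = λx₀ and T*x₀* = λx₀* for some x₀ > 0 and x₀* > 0. If T is ideal irreducible, then ker(λ − T) = Span{x₀}. -/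
open scoped ENNReal

variable {X : Type*}

section Aux
variable [NormedAddCommGroup X] [Lattice X] [HasSolidNorm X] [IsOrderedAddMonoid X] [NormedSpace ℝ X]

omit [NormedSpace ℝ X] in
lemma aux_two_semiclosed {a : X} (h : 0 ≤ a + a) : 0 ≤ a :=
  nsmul_two_semiclosed (by rw [two_nsmul]; exact h)

lemma aux_smul_nonneg {c : ℝ} (hc : 0 ≤ c) {x : X} (hx : 0 ≤ x) : 0 ≤ c • x := by
  have dyadic : ∀ (k m : ℕ), 0 ≤ ((m : ℝ) / 2 ^ k) • x := by
    intro k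
    induction k with
    | zero =>
      intro m
      simp only [pow_zero, div_one]
      rw [Nat.cast_smul_eq_nsmul ℝ m x]
      exact nsmul_nonneg hx m
    | succ k ih =>
      intro m
      apply aux_two_semiclosed
      have : ((m : ℝ) / 2 ^ (k+1)) • x + ((m : ℝ) / 2 ^ (k+1)) • x = ((m : ℝ) / 2 ^ k) • x := by
        rw [← add_smul]; ring_nf
      rw [this]; exact ih m
  have h2 : ∀ n : ℕ, (0:ℝ) < 2 ^ n := fun n => by positivity
  have hlow : ∀ n : ℕ, c - 1 / 2 ^ n ≤ (⌊c * 2 ^ n⌋₊ : ℝ) / 2 ^ n := by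
    intro n
    rw [sub_le_iff_le_add, ← add_div, le_div_iff₀ (h2 n)]
    have := Nat.sub_one_lt_floor (c * 2 ^ n)
    linarith
  have hhigh : ∀ n : ℕ, (⌊c * 2 ^ n⌋₊ : ℝ) / 2 ^ n ≤ c := by
    intro n
    rw [div_le_iff₀ (h2 n)]
    exact Nat.floor_le (by positivity)
  have hseq : Filter.Tendsto (fun n : ℕ => ((⌊c * 2 ^ n⌋₊ : ℝ) / 2 ^ n)) Filter.atTop (nhds c) := by
    refine tendsto_of_tendsto_of_tendsto_of_le_of_le (g := fun n : ℕ => c - 1 / 2 ^ n)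
      (h := fun _ : ℕ => c) ?_ tendsto_const_nhds hlow hhigh
    have : Filter.Tendsto (fun n : ℕ => (1:ℝ) / 2 ^ n) Filter.atTop (nhds 0) := by
      simpa [one_div, Function.comp_def] using tendsto_inv_atTop_zero.comp
        (tendsto_pow_atTop_atTop_of_one_lt (one_lt_two (α := ℝ)))
    simpa using tendsto_const_nhds.sub this
  have hcl : IsClosed {d : ℝ | 0 ≤ d • x} :=
    isClosed_nonneg.preimage (continuous_id.smul continuous_const)
  exact hcl.mem_of_tendsto hseq (Filter.Eventually.of_forall fun n => dyadic n _)

lemma aux_smul_le_smul {c : ℝ} (hc : 0 ≤ c) {x y : X} (h : x ≤ y) : c • x ≤ c • y := by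
  have := aux_smul_nonneg hc (sub_nonneg.2 h)
  rwa [smul_sub, sub_nonneg] at this

lemma aux_smul_sup {c : ℝ} (hc : 0 < c) (x y : X) : c • (x ⊔ y) = (c • x) ⊔ (c • y) := by
  apply le_antisymm
  · have h1 : x ≤ c⁻¹ • ((c • x) ⊔ (c • y)) := by
      have := aux_smul_le_smul (le_of_lt (inv_pos.2 hc)) (le_sup_left (a := c • x) (b := c • y))
      rwa [inv_smul_smul₀ hc.ne'] at this
    have h2 : y ≤ c⁻¹ • ((c • x) ⊔ (c • y)) := by
      have := aux_smul_le_smul (le_of_lt (inv_pos.2 hc)) (le_sup_right (a := c • x) (b := c • y))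
      rwa [inv_smul_smul₀ hc.ne'] at this
    have := aux_smul_le_smul hc.le (sup_le h1 h2)
    rwa [smul_inv_smul₀ hc.ne'] at this
  · exact sup_le (aux_smul_le_smul hc.le le_sup_left) (aux_smul_le_smul hc.le le_sup_right)

lemma aux_smul_inf {c : ℝ} (hc : 0 < c) (x y : X) : c • (x ⊓ y) = (c • x) ⊓ (c • y) := by
  have := aux_smul_sup hc (-x) (-y)
  have h2 : x ⊓ y = -((-x) ⊔ (-y)) := by rw [← neg_inf, neg_neg]
  rw [h2, smul_neg, this, neg_sup]
  simp

lemma aux_abs_smul_nonneg {c : ℝ} (hc : 0 ≤ c) (x : X) : |c • x| = c • |x| := by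
  rcases hc.eq_or_lt with rfl | hc
  · simp
  · rw [abs, abs, ← smul_neg, ← aux_smul_sup hc]

lemma aux_abs_smul (c : ℝ) (x : X) : |c • x| = |c| • |x| := by
  rcases le_or_gt 0 c with hc | hc
  · rw [aux_abs_smul_nonneg hc, abs_of_nonneg hc]
  · have h1 : c • x = (-c) • (-x) := by rw [neg_smul_neg]
    rw [h1, aux_abs_smul_nonneg (neg_nonneg.2 hc.le), abs_neg, abs_of_neg hc]

omit [NormedSpace ℝ X] in
lemma aux_neg_abs_le (a : X) : -|a| ≤ a := by
  have hy : -a ≤ |a| := by rw [abs]; exact le_sup_right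
  exact neg_le.mpr hy

omit [NormedSpace ℝ X] in
lemma aux_eq_zero_of_abs_nonpos {a : X} (h : |a| ≤ 0) : a = 0 :=
  le_antisymm ((le_abs_self a).trans h)
    (by have := (aux_neg_abs_le a); have h2 : (0:X) ≤ -|a| := neg_nonneg.2 h; exact h2.trans this)

/-- The ideal generated by `u`. -/
def idealOf (u : X) : Submodule ℝ X where
  carrier := {y | ∃ c : ℝ, 0 ≤ c ∧ |y| ≤ c • u}
  zero_mem' := ⟨0, le_refl 0, by simp⟩
  add_mem' := by
    rintro a b ⟨c, hc, hca⟩ ⟨d, hd, hdb⟩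
    exact ⟨c + d, by linarith, (abs_add_le a b).trans (by rw [add_smul]; exact add_le_add hca hdb)⟩
  smul_mem' := by
    rintro a y ⟨c, hc, hcy⟩
    refine ⟨|a| * c, by positivity, ?_⟩
    rw [aux_abs_smul, mul_smul]
    exact aux_smul_le_smul (abs_nonneg a) hcy

lemma idealOf_solid {u : X} {x y : X} (h : |y| ≤ |x|) (hx : x ∈ idealOf u) : y ∈ idealOf u := by
  obtain ⟨c, hc, hcx⟩ := hx; exact ⟨c, hc, h.trans hcx⟩

lemma mem_idealOf_self (u : X) (hu : 0 ≤ u) : u ∈ idealOf u := ⟨1, zero_le_one, by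
  rw [abs_of_nonneg hu, one_smul]⟩

omit [NormedSpace ℝ X] in
lemma aux_continuous_abs : Continuous (fun w : X => |w|) := by
  simpa [abs] using continuous_id.sup continuous_neg

/-- solidity of the closure -/
lemma closure_solid {I : Submodule ℝ X}
    (hI : ∀ x y : X, |y| ≤ |x| → x ∈ I → y ∈ I) {x y : X} (h : |y| ≤ |x|)
    (hx : x ∈ I.topologicalClosure) : y ∈ I.topologicalClosure := by
  have hg : Continuous (fun w : X => (y ⊓ |w|) ⊔ (-|w|)) := by
    exact (continuous_const.inf aux_continuous_abs).sup aux_continuous_abs.neg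
  have hmaps : Set.MapsTo (fun w : X => (y ⊓ |w|) ⊔ (-|w|)) (I : Set X) (I : Set X) := by
    intro w hw
    refine hI w _ ?_ hw
    have hb1 : (y ⊓ |w|) ⊔ (-|w|) ≤ |w| :=
      sup_le (inf_le_right) ((neg_nonpos.2 (abs_nonneg w)).trans (abs_nonneg w))
    have hb2 : -|w| ≤ (y ⊓ |w|) ⊔ (-|w|) := le_sup_right
    rw [abs]
    exact sup_le hb1 (neg_le.mp hb2)
  have hyx : (y ⊓ |x|) ⊔ (-|x|) = y := by
    have h1 : y ≤ |x| := (le_abs_self y).trans h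
    have h2 : -|x| ≤ y := (neg_le_neg h).trans (aux_neg_abs_le y)
    rw [inf_eq_left.2 h1, sup_eq_left.2 h2]
  have := map_mem_closure hg hx hmaps
  rwa [hyx] at this

lemma isClosedIdeal_closure (u : X) : IsClosedIdeal (idealOf u).topologicalClosure :=
  ⟨(idealOf u).isClosed_topologicalClosure,
    fun _ _ h hx => closure_solid (fun _ _ h' hx' => idealOf_solid h' hx') h hx⟩

variable {T : X →L[ℝ] X}

lemma T_mono (hT : IsPositiveOp T) {x y : X} (h : x ≤ y) : T x ≤ T y := by
  have := hT (y - x) (sub_nonneg.2 h)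
  rw [map_sub, sub_nonneg] at this
  exact this

omit [NormedSpace ℝ X] in
lemma aux_abs_eq (a : X) : |a| = a ⊔ -a := by rw [abs]

lemma abs_T_le (hT : IsPositiveOp T) (x : X) : |T x| ≤ T |x| := by
  have h1 : T x ≤ T |x| := T_mono hT (le_abs_self x)
  have h2 : -x ≤ |x| := by rw [abs]; exact le_sup_right
  have h3 : -(T x) ≤ T |x| := by rw [← map_neg]; exact T_mono hT h2
  rw [aux_abs_eq]
  exact sup_le h1 h3

lemma closure_invariant (hT : IsPositiveOp T) {u : X} {l : ℝ} (hl : 0 ≤ l)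
    (heu : T u = l • u) :
    ∀ x ∈ (idealOf u).topologicalClosure, T x ∈ (idealOf u).topologicalClosure := by
  intro x hx
  have hx' : x ∈ closure (idealOf u : Set X) := by
    rw [← (idealOf u).topologicalClosure_coe]; exact hx
  have hmaps : Set.MapsTo T (idealOf u : Set X) ((idealOf u) : Set X) := by
    rintro y ⟨c, hc, hcy⟩
    refine ⟨c * l, by positivity, ?_⟩
    calc |T y| ≤ T |y| := abs_T_le hT y
    _ ≤ T (c • u) := T_mono hT hcy
    _ = (c * l) • u := by rw [map_smul, heu, smul_smul]
  have := map_mem_closure T.continuous hx' hmaps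
  rw [← (idealOf u).topologicalClosure_coe] at this
  exact this



lemma unit_of_dense {u : X} (htop : (idealOf u).topologicalClosure = ⊤) (hu : 0 ≤ u)
    {v : X} (hv : 0 ≤ v) (hdisj : u ⊓ v = 0) : v = 0 := by
  have hmem : v ∈ closure (idealOf u : Set X) := by
    rw [← (idealOf u).topologicalClosure_coe, htop]; trivial
  have hcont : Continuous (fun w : X => |w| ⊓ v) := aux_continuous_abs.inf continuous_const
  have hmaps : Set.MapsTo (fun w : X => |w| ⊓ v) (idealOf u : Set X) {(0:X)} := by
    rintro w ⟨c, hc, hcw⟩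
    have hc1 : (0:ℝ) < c + 1 := by linarith
    have h1 : |w| ≤ (c+1) • u := hcw.trans (by
      rw [add_smul, one_smul]
      exact le_add_of_nonneg_right hu)
    have h2 : v ≤ (c+1) • v := by
      rw [add_smul, one_smul]
      exact le_add_of_nonneg_left (aux_smul_nonneg hc hv)
    have hle : |w| ⊓ v ≤ ((c+1) • u) ⊓ ((c+1) • v) := inf_le_inf h1 h2
    rw [← aux_smul_inf hc1, hdisj, smul_zero] at hle
    have hge : 0 ≤ |w| ⊓ v := le_inf (abs_nonneg w) hv
    simp only [Set.mem_singleton_iff]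
    exact le_antisymm hle hge
  have := map_mem_closure hcont hmem hmaps
  rw [closure_singleton, Set.mem_singleton_iff] at this
  rwa [abs_of_nonneg hv, inf_idem] at this

variable {f₀ : StrongDual ℝ X}

lemma f_mono (hf : IsPositiveFunc f₀) {x y : X} (h : x ≤ y) : f₀ x ≤ f₀ y := by
  have := hf (y - x) (sub_nonneg.2 h)
  rw [map_sub, sub_nonneg] at this
  exact this

/-- The null ideal of a positive functional. -/
def nullIdeal (f₀ : StrongDual ℝ X) (hf : IsPositiveFunc f₀) : Submodule ℝ X where
  carrier := {x | f₀ |x| = 0}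
  zero_mem' := by simp
  add_mem' := by
    intro a b ha hb
    refine le_antisymm ?_ (hf _ (abs_nonneg _))
    calc f₀ |a + b| ≤ f₀ (|a| + |b|) := f_mono hf (abs_add_le a b)
    _ = 0 := by rw [map_add, ha, hb, add_zero]
  smul_mem' := by
    intro c x hx
    simp only [Set.mem_setOf_eq] at *
    rw [aux_abs_smul, map_smul, smul_eq_mul, hx, mul_zero]

end Aux

theorem stmt6 [NormedAddCommGroup X] [Lattice X] [HasSolidNorm X] [IsOrderedAddMonoid X] [NormedSpace ℝ X]
    (hdim : 1 < Module.rank ℝ X)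
    (T : X →L[ℝ] X) (hT : IsPositiveOp T) (hT0 : T ≠ 0)
    (hirr : IdealIrreducible T)
    (l : ℝ) (x₀ : X) (hx₀ : 0 < x₀) (heig : T x₀ = l • x₀)
    (f₀ : StrongDual ℝ X) (hf₀ : IsPositiveFunc f₀) (hf₀0 : f₀ ≠ 0)
    (heig' : adjOp T f₀ = l • f₀) :
    {x : X | T x = l • x} = (Submodule.span ℝ {x₀} : Submodule ℝ X) := by
  -- adjoint evaluation
  have hadj : ∀ x : X, f₀ (T x) = l * f₀ x := by
    intro x
    have := congrArg (fun g : StrongDual ℝ X => g x) heig'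
    simpa [adjOp] using this
  -- l is nonnegative
  have hl0 : 0 ≤ l := by
    by_contra h
    push_neg at h
    have h1 : 0 ≤ l • x₀ := heig ▸ hT x₀ hx₀.le
    have h2 : 0 ≤ (-l⁻¹) • (l • x₀) :=
      aux_smul_nonneg (le_of_lt (neg_pos.2 (inv_lt_zero.2 h))) h1
    rw [neg_smul, inv_smul_smul₀ (ne_of_lt h), neg_nonneg] at h2
    exact absurd (lt_of_lt_of_le hx₀ h2) (lt_irrefl 0)
  -- l is nonzero
  have hlne : l ≠ 0 := by
    intro hl
    subst hl
    -- the closure of the ideal of x₀ is invariant and nontrivial, hence = ⊤; then T = 0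
    have hJ := isClosedIdeal_closure (X := X) x₀
    have hinv := closure_invariant hT (le_refl (0:ℝ)) heig
    rcases hirr _ hJ hinv with hbot | htop
    · have : x₀ ∈ (idealOf x₀).topologicalClosure :=
        Submodule.le_topologicalClosure _ (mem_idealOf_self x₀ hx₀.le)
      rw [hbot, Submodule.mem_bot] at this
      exact hx₀.ne' this
    · apply hT0
      ext x
      have hx : x ∈ closure (idealOf x₀ : Set X) := by
        rw [← (idealOf x₀).topologicalClosure_coe, htop]; trivial
      have hmaps : Set.MapsTo T (idealOf x₀ : Set X) {(0:X)} := by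
        rintro y ⟨c, hc, hcy⟩
        have : |T y| ≤ T (c • x₀) := (abs_T_le hT y).trans (T_mono hT hcy)
        rw [map_smul, heig, zero_smul, smul_zero] at this
        simp only [Set.mem_singleton_iff]
        exact aux_eq_zero_of_abs_nonpos this
      have := map_mem_closure T.continuous hx hmaps
      rw [closure_singleton, Set.mem_singleton_iff] at this
      simpa using this
  have hlpos : 0 < l := hl0.lt_of_ne (Ne.symm hlne)
  -- f₀ is strictly positive
  have hstrict : ∀ x : X, 0 < x → 0 < f₀ x := by
    have hN : IsClosedIdeal (nullIdeal f₀ hf₀) := by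
      constructor
      · have : (nullIdeal f₀ hf₀ : Set X) = (fun x : X => f₀ |x|) ⁻¹' {0} := rfl
        rw [this]
        exact IsClosed.preimage (f₀.continuous.comp aux_continuous_abs) isClosed_singleton
      · intro x y h hx
        refine le_antisymm ?_ (hf₀ _ (abs_nonneg _))
        calc f₀ |y| ≤ f₀ |x| := f_mono hf₀ h
        _ = 0 := hx
    have hNinv : ∀ x ∈ nullIdeal f₀ hf₀, T x ∈ nullIdeal f₀ hf₀ := by
      intro x hx
      refine le_antisymm ?_ (hf₀ _ (abs_nonneg _))
      calc f₀ |T x| ≤ f₀ (T |x|) := f_mono hf₀ (abs_T_le hT x)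
      _ = l * f₀ |x| := hadj _
      _ = 0 := by rw [show f₀ |x| = 0 from hx, mul_zero]
    rcases hirr _ hN hNinv with hbot | htop
    · intro x hx
      rcases (hf₀ x hx.le).eq_or_lt with heq | hlt
      · exfalso
        have hmem : x ∈ nullIdeal f₀ hf₀ := by
          show f₀ |x| = 0
          rw [abs_of_nonneg hx.le, ← heq]
        rw [hbot, Submodule.mem_bot] at hmem
        exact hx.ne' hmem
      · exact hlt
    · exfalso
      apply hf₀0
      ext x
      have hx : x ∈ nullIdeal f₀ hf₀ := htop ▸ Submodule.mem_top
      have hx' : f₀ |x| = 0 := hx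
      have h1 : f₀ x ≤ 0 := (f_mono hf₀ (le_abs_self x)).trans_eq hx'
      have h2 : f₀ (-x) ≤ 0 := by
        have : -x ≤ |x| := by rw [abs]; exact le_sup_right
        exact (f_mono hf₀ this).trans_eq hx'
      rw [map_neg, neg_nonpos] at h2
      simpa using le_antisymm h1 h2
  -- absolute values of eigenvectors are eigenvectors
  have habs : ∀ z : X, T z = l • z → T |z| = l • |z| := by
    intro z hz
    have h1 : l • |z| ≤ T |z| := by
      have := abs_T_le hT z
      rwa [hz, aux_abs_smul_nonneg hl0] at this
    have h0 : f₀ (T |z| - l • |z|) = 0 := by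
      rw [map_sub, hadj, map_smul, smul_eq_mul, sub_self]
    have hy : 0 ≤ T |z| - l • |z| := sub_nonneg.2 h1
    rcases hy.eq_or_lt with heq | hlt
    · exact sub_eq_zero.mp heq.symm
    · exact absurd h0 (hstrict _ hlt).ne'
  -- positive eigenvectors dominate: disjoint positive vectors vanish
  have hunit : ∀ u : X, 0 < u → T u = l • u → ∀ v : X, 0 ≤ v → u ⊓ v = 0 → v = 0 := by
    intro u hu heu v hv hdisj
    have hJ := isClosedIdeal_closure (X := X) u
    have hinv := closure_invariant hT hl0 heu
    rcases hirr _ hJ hinv with hbot | htop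
    · exfalso
      have : u ∈ (idealOf u).topologicalClosure :=
        Submodule.le_topologicalClosure _ (mem_idealOf_self u hu.le)
      rw [hbot, Submodule.mem_bot] at this
      exact hu.ne' this
    · exact unit_of_dense htop hu.le hv hdisj
  -- main argument
  ext x
  simp only [Set.mem_setOf_eq, SetLike.mem_coe, Submodule.mem_span_singleton]
  constructor
  · intro hx
    have hfx₀ : 0 < f₀ x₀ := hstrict x₀ hx₀
    set t : ℝ := f₀ x / f₀ x₀ with ht
    set z : X := x - t • x₀ with hzdef
    have hz : T z = l • z := by
      rw [hzdef, map_sub, map_smul, hx, heig, smul_sub, smul_comm t l x₀]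
    have hfz : f₀ z = 0 := by
      rw [hzdef, map_sub, map_smul, smul_eq_mul, ht, div_mul_cancel₀ _ hfx₀.ne', sub_self]
    have hzabs : T |z| = l • |z| := habs z hz
    have hzp : T z⁺ = l • z⁺ := by
      have h2 : T (z⁺ + z⁺) = l • z⁺ + l • z⁺ := by
        have hsum : z⁺ + z⁺ = |z| + z := by
          have ha := posPart_add_negPart z
          have hb := posPart_sub_negPart z
          have : z⁺ + z⁺ = (z⁺ + z⁻) + (z⁺ - z⁻) := by abel
          rw [this, ha, hb]
        rw [hsum, map_add, hzabs, hz, ← smul_add, ← hsum, smul_add]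
      rw [map_add] at h2
      have : (2:ℝ) • T z⁺ = (2:ℝ) • (l • z⁺) := by
        rw [two_smul, two_smul]; exact h2
      have := congrArg (fun w => (2:ℝ)⁻¹ • w) this
      simpa [smul_smul] using this
    have hz0 : z = 0 := by
      rcases eq_or_ne z⁺ 0 with hp0 | hpne
      · -- z ≤ 0
        have hzle : z ≤ 0 := posPart_eq_zero.mp hp0
        rcases eq_or_ne z 0 with h | h
        · exact h
        · exfalso
          have : 0 < -z := by
            rw [neg_pos]
            exact hzle.lt_of_ne h
          have := hstrict _ this
          rw [map_neg, hfz, neg_zero] at this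
          exact lt_irrefl 0 this
      · have hppos : 0 < z⁺ := (posPart_nonneg z).lt_of_ne (Ne.symm hpne)
        have hn0 : z⁻ = 0 :=
          hunit z⁺ hppos hzp z⁻ (negPart_nonneg z) (posPart_inf_negPart_eq_zero z)
        have hznn : 0 ≤ z := by
          have := posPart_sub_negPart z
          rw [hn0, sub_zero] at this
          rw [← this]; exact posPart_nonneg z
        rcases eq_or_ne z 0 with h | h
        · exact h
        · exfalso
          have := hstrict z (hznn.lt_of_ne (Ne.symm h))
          rw [hfz] at this
          exact lt_irrefl 0 this
    refine ⟨t, ?_⟩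
    have : x - t • x₀ = 0 := hz0
    rw [sub_eq_zero] at this
    exact this.symm
  · rintro ⟨c, rfl⟩
    rw [map_smul, heig, smul_comm]
end

section
/- Let T be a positive operator on a real Banach lattice such that T*x₀* = λx₀* for some strictly positive functional x₀*. Then for any x ∈ X with Tx ≥ λx or Tx ≤ λx, we have Tx₊ = λx₊ and Tx₋ = λx₋. -/
open scoped ENNReal

variable {X : Type*}

open Filter Topology in
private lemma dyadic_tendsto_aux (c : ℝ) :
    Filter.Tendsto (fun n : ℕ => (⌊c * 2 ^ n⌋ : ℝ) / 2 ^ n) Filter.atTop (nhds c) := by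
  have h0 : ∀ n : ℕ, c - (1 / 2 : ℝ) ^ n ≤ (⌊c * 2 ^ n⌋ : ℝ) / 2 ^ n := by
    intro n
    rw [le_div_iff₀ (by positivity : (0:ℝ) < 2 ^ n)]
    have h1 := Int.sub_one_lt_floor (c * 2 ^ n)
    have h2 : (1 / 2 : ℝ) ^ n * 2 ^ n = 1 := by
      rw [← mul_pow]; norm_num
    nlinarith
  have h1 : ∀ n : ℕ, (⌊c * 2 ^ n⌋ : ℝ) / 2 ^ n ≤ c := by
    intro n
    rw [div_le_iff₀ (by positivity : (0:ℝ) < 2 ^ n)]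
    exact Int.floor_le _
  have hl : Filter.Tendsto (fun n : ℕ => c - (1 / 2 : ℝ) ^ n) Filter.atTop (nhds c) := by
    have h := tendsto_pow_atTop_nhds_zero_of_lt_one
      (by norm_num : (0:ℝ) ≤ 1 / 2) (by norm_num : (1/2 : ℝ) < 1)
    simpa using tendsto_const_nhds.sub h
  exact tendsto_of_tendsto_of_tendsto_of_le_of_le hl tendsto_const_nhds h0 h1

private lemma pow_semiclosed_aux [NormedAddCommGroup X] [Lattice X] [HasSolidNorm X] [IsOrderedAddMonoid X] [NormedSpace ℝ X] (k : ℕ) :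
    ∀ z : X, 0 ≤ ((2 : ℝ) ^ k) • z → 0 ≤ z := by
  induction k with
  | zero => intro z h; simpa using h
  | succ k ih =>
    intro z h
    have h2 : 0 ≤ (2 : ℝ) • z := by
      apply ih
      rw [smul_smul, ← pow_succ]
      exact h
    have hcast : ((2 : ℕ) : ℝ) • z = (2 : ℕ) • z := Nat.cast_smul_eq_nsmul ℝ 2 z
    apply nsmul_two_semiclosed
    rw [← hcast]
    push_cast
    exact h2

private lemma real_smul_nonneg_aux [NormedAddCommGroup X] [Lattice X] [HasSolidNorm X] [IsOrderedAddMonoid X] [NormedSpace ℝ X]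
    {c : ℝ} (hc : 0 ≤ c) {y : X} (hy : 0 ≤ y) : 0 ≤ c • y := by
  have hmem : ∀ n : ℕ, 0 ≤ ((⌊c * 2 ^ n⌋ : ℝ) / 2 ^ n) • y := by
    intro n
    apply pow_semiclosed_aux n
    have hne : ((2 : ℝ) ^ n) ≠ 0 := by positivity
    have hmul : (2 : ℝ) ^ n * ((⌊c * 2 ^ n⌋ : ℝ) / 2 ^ n) = (⌊c * 2 ^ n⌋ : ℝ) := by
      field_simp
    rw [smul_smul, hmul]
    have hfl : 0 ≤ ⌊c * 2 ^ n⌋ := Int.floor_nonneg.2 (by positivity)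
    obtain ⟨m, hm⟩ := Int.eq_ofNat_of_zero_le hfl
    rw [hm]
    push_cast
    rw [Nat.cast_smul_eq_nsmul]
    exact nsmul_nonneg hy m
  have htend : Filter.Tendsto (fun n : ℕ => ((⌊c * 2 ^ n⌋ : ℝ) / 2 ^ n) • y)
      Filter.atTop (nhds (c • y)) :=
    (dyadic_tendsto_aux c).smul tendsto_const_nhds
  exact isClosed_nonneg.mem_of_tendsto htend (Filter.Eventually.of_forall hmem)

private lemma real_smul_mono_aux [NormedAddCommGroup X] [Lattice X] [HasSolidNorm X] [IsOrderedAddMonoid X] [NormedSpace ℝ X]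
    {c : ℝ} (hc : 0 ≤ c) {a b : X} (hab : a ≤ b) : c • a ≤ c • b := by
  have h := real_smul_nonneg_aux hc (sub_nonneg.2 hab)
  rw [smul_sub] at h
  exact sub_nonneg.1 h

private lemma real_smul_sup_aux [NormedAddCommGroup X] [Lattice X] [HasSolidNorm X] [IsOrderedAddMonoid X] [NormedSpace ℝ X]
    {c : ℝ} (hc : 0 < c) (a b : X) : c • (a ⊔ b) = c • a ⊔ c • b := by
  refine le_antisymm ?_ (sup_le (real_smul_mono_aux hc.le le_sup_left)
    (real_smul_mono_aux hc.le le_sup_right))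
  have ha : a ≤ c⁻¹ • (c • a ⊔ c • b) := by
    calc a = c⁻¹ • (c • a) := (inv_smul_smul₀ hc.ne' a).symm
      _ ≤ c⁻¹ • (c • a ⊔ c • b) := real_smul_mono_aux (inv_nonneg.2 hc.le) le_sup_left
  have hb : b ≤ c⁻¹ • (c • a ⊔ c • b) := by
    calc b = c⁻¹ • (c • b) := (inv_smul_smul₀ hc.ne' b).symm
      _ ≤ c⁻¹ • (c • a ⊔ c • b) := real_smul_mono_aux (inv_nonneg.2 hc.le) le_sup_right
  calc c • (a ⊔ b) ≤ c • (c⁻¹ • (c • a ⊔ c • b)) := real_smul_mono_aux hc.le (sup_le ha hb)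
    _ = c • a ⊔ c • b := smul_inv_smul₀ hc.ne' _

theorem stmt9_aux [NormedAddCommGroup X] [Lattice X] [HasSolidNorm X] [IsOrderedAddMonoid X] [NormedSpace ℝ X]
    (T : X →L[ℝ] X) (hT : IsPositiveOp T)
    (l : ℝ) (f₀ : StrongDual ℝ X) (hf₀ : StrictlyPositiveFunc f₀)
    (heig : adjOp T f₀ = l • f₀)
    (x : X) (hx : l • x ≤ T x) :
    T (x ⊔ 0) = l • (x ⊔ 0) ∧ T (-x ⊔ 0) = l • (-x ⊔ 0) := by
  have hfT : ∀ y : X, f₀ (T y) = l * f₀ y := by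
    intro y
    have := congrArg (fun g : StrongDual ℝ X => g y) heig
    simpa [adjOp] using this
  have hzero : ∀ y : X, 0 ≤ y → f₀ y = 0 → y = 0 := by
    intro y hy hf
    by_contra h
    exact absurd hf (ne_of_gt (hf₀ y (hy.lt_of_ne (Ne.symm h))))
  have hmono : Monotone T := fun a b hab => by
    have := hT _ (sub_nonneg.2 hab)
    rw [map_sub] at this
    exact sub_nonneg.1 this
  have h1 : l • (x ⊔ 0) ≤ T (x ⊔ 0) := by
    rcases lt_trichotomy l 0 with hl | hl | hl
    · have hp : 0 ≤ (-l) • (x ⊔ 0) :=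
        real_smul_nonneg_aux (by linarith) (le_sup_right : (0:X) ≤ x ⊔ 0)
      rw [neg_smul] at hp
      exact (neg_nonneg.1 hp).trans (hT _ le_sup_right)
    · subst hl
      simpa using hT _ (le_sup_right : (0:X) ≤ x ⊔ 0)
    · have h2 : T x ≤ T (x ⊔ 0) := hmono le_sup_left
      have h3 : (0 : X) ≤ T (x ⊔ 0) := hT _ le_sup_right
      calc l • (x ⊔ 0) = (l • x) ⊔ (l • (0 : X)) := real_smul_sup_aux hl x 0
        _ = (l • x) ⊔ 0 := by rw [smul_zero]
        _ ≤ T (x ⊔ 0) := sup_le (hx.trans h2) h3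
  have hval : ∀ y : X, f₀ (T y - l • y) = 0 := by
    intro y
    rw [map_sub, map_smul, hfT]
    simp
  have e1 : T (x ⊔ 0) - l • (x ⊔ 0) = 0 := hzero _ (sub_nonneg.2 h1) (hval _)
  have key : (x ⊔ 0) - (-x ⊔ 0) = x := by
    have := posPart_sub_negPart x
    simpa [posPart_def, negPart_def] using this
  have e2 : T (-x ⊔ 0) - l • (-x ⊔ 0) = 0 := by
    have hcalc : T (-x ⊔ 0) - l • (-x ⊔ 0)
        = (T (x ⊔ 0) - l • (x ⊔ 0)) - (T x - l • x) := by
      have hTx : T x = T (x ⊔ 0) - T (-x ⊔ 0) := by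
        rw [← map_sub, key]
      have hlx : l • x = l • (x ⊔ 0) - l • (-x ⊔ 0) := by
        rw [← smul_sub, key]
      rw [hTx, hlx]; abel
    have hle : T (-x ⊔ 0) - l • (-x ⊔ 0) ≤ 0 := by
      rw [hcalc, e1, zero_sub, neg_nonpos]
      exact sub_nonneg.2 hx
    have : -(T (-x ⊔ 0) - l • (-x ⊔ 0)) = 0 := by
      apply hzero _ (neg_nonneg.2 hle)
      rw [map_neg, hval]; ring
    exact neg_eq_zero.1 this
  exact ⟨sub_eq_zero.1 e1, sub_eq_zero.1 e2⟩

theorem stmt9 [NormedAddCommGroup X] [Lattice X] [HasSolidNorm X] [IsOrderedAddMonoid X] [NormedSpace ℝ X]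
    (T : X →L[ℝ] X) (hT : IsPositiveOp T)
    (l : ℝ) (f₀ : StrongDual ℝ X) (hf₀ : StrictlyPositiveFunc f₀)
    (heig : adjOp T f₀ = l • f₀)
    (x : X) (hx : l • x ≤ T x ∨ T x ≤ l • x) :
    T (x ⊔ 0) = l • (x ⊔ 0) ∧ T (-x ⊔ 0) = l • (-x ⊔ 0) := by
  rcases hx with hx | hx
  · exact stmt9_aux T hT l f₀ hf₀ heig x hx
  · have h := stmt9_aux T hT l f₀ hf₀ heig (-x) (by simpa [smul_neg, map_neg] using neg_le_neg hx)
    rw [neg_neg] at h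
    exact ⟨h.2, h.1⟩
end
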